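/- Let |ψ_±⟩ and |φ_±⟩ be unit vectors in a finite-dimensional complex Hilbert space with |⟨φ_+|φ_−⟩| ≤ |⟨ψ_+|ψ_−⟩|. Suppose a completely positive trace-non-increasing map E satisfies E(|ψ_±⟩⟨ψ_±|) = p_± |φ_±⟩⟨φ_±| with p_± > 0. Then min{p_+, p_−} ≤ (1 − |⟨ψ_+|ψ_−⟩|)/(1 − |⟨φ_+|φ_−⟩|) whenever |⟨φ_+|φ_−⟩| < |⟨ψ_+|ψ_−⟩|. -/

import Mathlib

open Matrix Set
open scoped ComplexOrder

/-- Square root of a positive semidefinite matrix (junk value `0` otherwise). -/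
noncomputable def msqrt {n : Type*} [Fintype n] [DecidableEq n] (A : Matrix n n ℂ) :
    Matrix n n ℂ :=
  open scoped Classical in
  if h : A.PosSemidef then
    (h.1.eigenvectorUnitary : Matrix n n ℂ) * diagonal ((↑) ∘ (√·) ∘ h.1.eigenvalues) *
      (star (h.1.eigenvectorUnitary : Matrix n n ℂ)) else 0

/-- Uhlmann fidelity `F(ρ,σ) = Tr √(√ρ σ √ρ)`. -/
noncomputable def fid {n : Type*} [Fintype n] [DecidableEq n] (ρ σ : Matrix n n ℂ) : ℝ :=
  (msqrt (msqrt ρ * σ * msqrt ρ)).trace.re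

/-- The rank-one projector `|φ⟩⟨φ|` as a matrix. -/
noncomputable def outer {n : Type*} (φ : n → ℂ) : Matrix n n ℂ := Matrix.of fun i j => φ i * star (φ j)

/-- The inner product `⟨φ|ψ⟩`. -/
noncomputable def dot {n : Type*} [Fintype n] (φ ψ : n → ℂ) : ℂ := ∑ i, star (φ i) * ψ i

/-- The Choi matrix of a linear map on matrices. -/
noncomputable def choi {n : Type*} [Fintype n] [DecidableEq n]
    (E : Matrix n n ℂ →ₗ[ℂ] Matrix n n ℂ) : Matrix (n × n) (n × n) ℂ :=
  Matrix.of fun p q => (E (Matrix.single p.1 q.1 1)) p.2 q.2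

/-- A quantum operation: a completely positive (positive semidefinite Choi matrix)
trace-non-increasing linear map on matrices. -/
def IsQuantumOp {n : Type*} [Fintype n] [DecidableEq n]
    (E : Matrix n n ℂ →ₗ[ℂ] Matrix n n ℂ) : Prop :=
  (choi E).PosSemidef ∧ ∀ ρ : Matrix n n ℂ, ρ.PosSemidef → (E ρ).trace.re ≤ ρ.trace.re

namespace PBAux

noncomputable def vouter {n : Type*} (a b : n → ℂ) : Matrix n n ℂ :=
  Matrix.of fun i j => a i * star (b j)

noncomputable def emb {n : Type*} (a y : n → ℂ) : n × n → ℂ := fun p => star (a p.1) * y p.2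

lemma outer_eq_vouter {n : Type*} (φ : n → ℂ) : outer φ = vouter φ φ := rfl

variable {d : ℕ}

lemma sesq_vouter (a b y x : Fin d → ℂ) :
    star y ⬝ᵥ ((vouter a b) *ᵥ x) = star (dot a y) * dot b x := by
  simp only [dot, dotProduct, mulVec, vouter, Matrix.of_apply, Pi.star_apply, star_sum,
    star_mul', star_star, Finset.mul_sum]
  simp only [Finset.sum_mul]
  conv_rhs => rw [Finset.sum_comm]
  exact Finset.sum_congr rfl fun i _ => Finset.sum_congr rfl fun j _ => by ring

lemma dot_self_eq_one {a : Fin d → ℂ} (h : ∑ i, Complex.normSq (a i) = 1) :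
    dot a a = 1 := by
  have : dot a a = ((∑ i, Complex.normSq (a i) : ℝ) : ℂ) := by
    push_cast
    simp only [dot, Complex.normSq_eq_conj_mul_self]
    rfl
  rw [this, h]; norm_num

lemma dot_conj (a b : Fin d → ℂ) : dot b a = star (dot a b) := by
  simp only [dot, star_sum, star_mul', star_star]
  exact Finset.sum_congr rfl fun i _ => by ring

lemma trace_vouter (a b : Fin d → ℂ) : (vouter a b).trace = dot b a := by
  simp only [Matrix.trace, Matrix.diag, vouter, Matrix.of_apply, dot]
  exact Finset.sum_congr rfl fun i _ => by ring

lemma dot_sub (a x y : Fin d → ℂ) : dot a (x - y) = dot a x - dot a y := by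
  simp [dot, mul_sub, Finset.sum_sub_distrib]

lemma dot_smul (a : Fin d → ℂ) (c : ℂ) (x : Fin d → ℂ) : dot a (c • x) = c * dot a x := by
  simp only [dot, Pi.smul_apply, smul_eq_mul, Finset.mul_sum]
  exact Finset.sum_congr rfl fun i _ => by ring

lemma dot_single (a : Fin d → ℂ) (j : Fin d) : dot a (Pi.single j 1) = star (a j) := by
  simp [dot, Pi.single_apply, Finset.sum_ite_eq']

lemma single_dot (w : Fin d → ℂ) (i : Fin d) : star (Pi.single i 1 : Fin d → ℂ) ⬝ᵥ w = w i := by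
  simp [dotProduct, Pi.single_apply, Finset.sum_ite_eq']

lemma mulVec_single' (M : Matrix (Fin d) (Fin d) ℂ) (j i : Fin d) :
    (M *ᵥ Pi.single j 1) i = M i j := by
  simp [mulVec, dotProduct, Pi.single_apply, Finset.sum_ite_eq']

lemma vouter_self_posSemidef (a : Fin d → ℂ) : (vouter a a).PosSemidef := by
  rw [Matrix.posSemidef_iff_dotProduct_mulVec]
  constructor
  · ext i j
    simp only [Matrix.conjTranspose_apply, vouter, Matrix.of_apply, star_mul', star_star]
    ring
  · intro x
    rw [sesq_vouter]
    exact star_mul_self_nonneg _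


lemma sum_perm4 (f : Fin d → Fin d → Fin d → Fin d → ℂ) :
    (∑ i, ∑ j, ∑ k, ∑ l, f i j k l) = ∑ k, ∑ i, ∑ l, ∑ j, f i j k l := by
  calc (∑ i, ∑ j, ∑ k, ∑ l, f i j k l)
      = ∑ i, ∑ k, ∑ j, ∑ l, f i j k l :=
        Finset.sum_congr rfl fun i _ => Finset.sum_comm
    _ = ∑ k, ∑ i, ∑ j, ∑ l, f i j k l := Finset.sum_comm
    _ = ∑ k, ∑ i, ∑ l, ∑ j, f i j k l :=
        Finset.sum_congr rfl fun k _ => Finset.sum_congr rfl fun i _ => Finset.sum_comm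

lemma E_vouter (E : Matrix (Fin d) (Fin d) ℂ →ₗ[ℂ] Matrix (Fin d) (Fin d) ℂ)
    (a b : Fin d → ℂ) (i j : Fin d) :
    E (vouter a b) i j = ∑ k, ∑ l, a k * star (b l) * choi E (k, i) (l, j) := by
  have h : vouter a b = ∑ k, ∑ l, (a k * star (b l)) • Matrix.single k l (1 : ℂ) := by
    conv_lhs => rw [Matrix.matrix_eq_sum_single (vouter a b)]
    refine Finset.sum_congr rfl fun k _ => Finset.sum_congr rfl fun l _ => ?_
    rw [Matrix.smul_single, smul_eq_mul, mul_one]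
    rfl
  rw [h, map_sum]
  simp only [map_sum, LinearMap.map_smul, Matrix.sum_apply, Matrix.smul_apply, smul_eq_mul, choi,
    Matrix.of_apply]

lemma sesq_choi (E : Matrix (Fin d) (Fin d) ℂ →ₗ[ℂ] Matrix (Fin d) (Fin d) ℂ)
    (a b y x : Fin d → ℂ) :
    star y ⬝ᵥ (E (vouter a b) *ᵥ x) = star (emb a y) ⬝ᵥ (choi E *ᵥ emb b x) := by
  simp only [dotProduct, mulVec, Pi.star_apply, emb, E_vouter, star_mul', star_star,
    Finset.mul_sum, Finset.sum_mul, Fintype.sum_prod_type]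
  rw [sum_perm4]
  refine Finset.sum_congr rfl fun k _ => Finset.sum_congr rfl fun i _ =>
    Finset.sum_congr rfl fun l _ => Finset.sum_congr rfl fun j _ => by ring

lemma cs_dot {m : Type*} [Fintype m] (u v : m → ℂ) :
    ‖star u ⬝ᵥ v‖ ^ 2 ≤ (star u ⬝ᵥ u).re * (star v ⬝ᵥ v).re := by
  have hu : inner ℂ (WithLp.toLp 2 u) (WithLp.toLp 2 v) = star u ⬝ᵥ v := by
    rw [EuclideanSpace.inner_toLp_toLp, dotProduct_comm]
  have huu : inner ℂ (WithLp.toLp 2 u) (WithLp.toLp 2 u) = star u ⬝ᵥ u := by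
    rw [EuclideanSpace.inner_toLp_toLp, dotProduct_comm]
  have hvv : inner ℂ (WithLp.toLp 2 v) (WithLp.toLp 2 v) = star v ⬝ᵥ v := by
    rw [EuclideanSpace.inner_toLp_toLp, dotProduct_comm]
  set u' := WithLp.toLp 2 u
  set v' := WithLp.toLp 2 v
  have h1 : ‖(inner ℂ u' v')‖ ≤ ‖u'‖ * ‖v'‖ := norm_inner_le_norm u' v'
  have h2 : RCLike.re (inner ℂ u' u') = ‖u'‖ ^ 2 := inner_self_eq_norm_sq u'
  have h3 : RCLike.re (inner ℂ v' v') = ‖v'‖ ^ 2 := inner_self_eq_norm_sq v'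
  rw [hu] at h1
  rw [huu] at h2
  rw [hvv] at h3
  simp only [RCLike.re_to_complex] at h2 h3
  rw [h2, h3]
  calc ‖star u ⬝ᵥ v‖ ^ 2 ≤ (‖u'‖ * ‖v'‖) ^ 2 := by
        have := norm_nonneg (star u ⬝ᵥ v)
        nlinarith [norm_nonneg u', norm_nonneg v']
    _ = ‖u'‖ ^ 2 * ‖v'‖ ^ 2 := by ring

open scoped MatrixOrder in
lemma psd_cs {m : Type*} [Fintype m] [DecidableEq m] {C : Matrix m m ℂ} (hC : C.PosSemidef)
    (u v : m → ℂ) :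
    ‖star u ⬝ᵥ (C *ᵥ v)‖ ^ 2 ≤ (star u ⬝ᵥ (C *ᵥ u)).re * (star v ⬝ᵥ (C *ᵥ v)).re := by
  have hsq : (CFC.sqrt C) * (CFC.sqrt C) = C := CFC.sqrt_mul_sqrt_self C hC.nonneg
  have hherm : (CFC.sqrt C).conjTranspose = (CFC.sqrt C) := (CFC.sqrt_nonneg C).isSelfAdjoint
  have key : ∀ a b : m → ℂ, star a ⬝ᵥ (C *ᵥ b) = star ((CFC.sqrt C) *ᵥ a) ⬝ᵥ ((CFC.sqrt C) *ᵥ b) := by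
    intro a b
    conv_lhs => rw [← hsq, ← Matrix.mulVec_mulVec, Matrix.dotProduct_mulVec]
    congr 1
    rw [Matrix.star_mulVec, hherm]
  rw [key, key, key]
  exact cs_dot _ _

lemma vec_eq_zero_of_dot {w : Fin d → ℂ} (h : ∀ y : Fin d → ℂ, star y ⬝ᵥ w = 0) : w = 0 := by
  funext i
  have := h (Pi.single i 1)
  rwa [single_dot] at this

lemma rank_one_of_cs {M : Matrix (Fin d) (Fin d) ℂ} {a b : Fin d → ℂ}
    (ha1 : dot a a = 1) (hb1 : dot b b = 1) {K : ℝ}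
    (hcs : ∀ y x, ‖star y ⬝ᵥ (M *ᵥ x)‖ ^ 2 ≤
      K * (Complex.normSq (dot a y) * Complex.normSq (dot b x))) :
    M = (star a ⬝ᵥ (M *ᵥ b)) • vouter a b := by
  have hA : ∀ x, dot b x = 0 → M *ᵥ x = 0 := by
    intro x hx
    apply vec_eq_zero_of_dot
    intro y
    have h := hcs y x
    rw [hx] at h
    simp only [map_zero, mul_zero] at h
    have h0 : ‖star y ⬝ᵥ (M *ᵥ x)‖ = 0 := by
      nlinarith [norm_nonneg (star y ⬝ᵥ (M *ᵥ x))]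
    exact norm_eq_zero.mp h0
  have hB : ∀ y, dot a y = 0 → ∀ x, star y ⬝ᵥ (M *ᵥ x) = 0 := by
    intro y hy x
    have h := hcs y x
    rw [hy] at h
    simp only [map_zero, zero_mul, mul_zero] at h
    have h0 : ‖star y ⬝ᵥ (M *ᵥ x)‖ = 0 := by
      nlinarith [norm_nonneg (star y ⬝ᵥ (M *ᵥ x))]
    exact norm_eq_zero.mp h0
  ext i j
  have hxj : M *ᵥ (Pi.single j 1) = star (b j) • (M *ᵥ b) := by
    have h0 : dot b ((Pi.single j 1 : Fin d → ℂ) - star (b j) • b) = 0 := by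
      rw [dot_sub, dot_smul, dot_single, hb1, mul_one, sub_self]
    have h1 := hA _ h0
    rw [Matrix.mulVec_sub, Matrix.mulVec_smul, sub_eq_zero] at h1
    exact h1
  have hyi : star (Pi.single i 1 : Fin d → ℂ) ⬝ᵥ (M *ᵥ b) = a i * (star a ⬝ᵥ (M *ᵥ b)) := by
    have h0 : dot a ((Pi.single i 1 : Fin d → ℂ) - star (a i) • a) = 0 := by
      rw [dot_sub, dot_smul, dot_single, ha1, mul_one, sub_self]
    have h1 := hB _ h0 b
    rw [star_sub, sub_dotProduct, star_smul, smul_dotProduct, sub_eq_zero] at h1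
    simpa [star_star, smul_eq_mul] using h1
  calc M i j = (M *ᵥ Pi.single j 1) i := (mulVec_single' M j i).symm
    _ = star (b j) * (M *ᵥ b) i := by rw [hxj]; simp
    _ = star (b j) * (star (Pi.single i 1 : Fin d → ℂ) ⬝ᵥ (M *ᵥ b)) := by rw [single_dot]
    _ = ((star a ⬝ᵥ (M *ᵥ b)) • vouter a b) i j := by
        rw [hyi]; simp only [Matrix.smul_apply, vouter, Matrix.of_apply, smul_eq_mul]; ring

end PBAux

open PBAux in
set_option maxHeartbeats 1000000 in
theorem prob_bound_pure_targets {d : ℕ} (ψp ψm φp φm : Fin d → ℂ)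
    (hψp : ∑ i, Complex.normSq (ψp i) = 1) (hψm : ∑ i, Complex.normSq (ψm i) = 1)
    (hφp : ∑ i, Complex.normSq (φp i) = 1) (hφm : ∑ i, Complex.normSq (φm i) = 1)
    (E : Matrix (Fin d) (Fin d) ℂ →ₗ[ℂ] Matrix (Fin d) (Fin d) ℂ) (hE : IsQuantumOp E)
    (pp pm : ℝ) (hpp : 0 < pp) (hpm : 0 < pm)
    (hEp : E (outer ψp) = (pp : ℂ) • outer φp)
    (hEm : E (outer ψm) = (pm : ℂ) • outer φm)
    (hov : ‖dot φp φm‖ < ‖dot ψp ψm‖) :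
    min pp pm ≤ (1 - ‖dot ψp ψm‖) / (1 - ‖dot φp φm‖) := by
  obtain ⟨hChoi, hTr⟩ := hE
  have hdψp : dot ψp ψp = 1 := dot_self_eq_one hψp
  have hdψm : dot ψm ψm = 1 := dot_self_eq_one hψm
  have hdφp : dot φp φp = 1 := dot_self_eq_one hφp
  have hdφm : dot φm φm = 1 := dot_self_eq_one hφm
  set s := ‖dot ψp ψm‖ with hs_def
  set t := ‖dot φp φm‖ with ht_def
  have ht0 : (0:ℝ) ≤ t := norm_nonneg _
  have hs0 : (0:ℝ) < s := lt_of_le_of_lt ht0 hov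
  -- s ≤ 1 from Cauchy-Schwarz with the identity matrix
  have hs1 : s ≤ 1 := by
    have h := psd_cs (Matrix.PosSemidef.one (n := Fin d) (R := ℂ)) ψp ψm
    simp only [Matrix.one_mulVec] at h
    have e1 : star ψp ⬝ᵥ ψm = dot ψp ψm := rfl
    have e2 : star ψp ⬝ᵥ ψp = dot ψp ψp := rfl
    have e3 : star ψm ⬝ᵥ ψm = dot ψm ψm := rfl
    rw [e1, e2, e3, hdψp, hdψm] at h
    simp only [Complex.one_re, mul_one] at h
    nlinarith [hs0.le]
  have ht1 : t < 1 := lt_of_lt_of_le hov hs1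
  -- quadratic forms of the diagonal images
  have hqp : ∀ y, (star y ⬝ᵥ (E (vouter ψp ψp) *ᵥ y)).re = pp * Complex.normSq (dot φp y) := by
    intro y
    rw [← outer_eq_vouter, hEp, outer_eq_vouter, Matrix.smul_mulVec,
      dotProduct_smul, sesq_vouter]
    have hz : star (dot φp y) * dot φp y = ((Complex.normSq (dot φp y) : ℝ) : ℂ) := by
      rw [Complex.normSq_eq_conj_mul_self]; rfl
    rw [smul_eq_mul, hz, ← Complex.ofReal_mul]
    exact Complex.ofReal_re _
  have hqm : ∀ y, (star y ⬝ᵥ (E (vouter ψm ψm) *ᵥ y)).re = pm * Complex.normSq (dot φm y) := by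
    intro y
    rw [← outer_eq_vouter, hEm, outer_eq_vouter, Matrix.smul_mulVec,
      dotProduct_smul, sesq_vouter]
    have hz : star (dot φm y) * dot φm y = ((Complex.normSq (dot φm y) : ℝ) : ℂ) := by
      rw [Complex.normSq_eq_conj_mul_self]; rfl
    rw [smul_eq_mul, hz, ← Complex.ofReal_mul]
    exact Complex.ofReal_re _
  -- Cauchy-Schwarz through the Choi matrix
  have keyCS : ∀ a b y x : Fin d → ℂ,
      ‖star y ⬝ᵥ (E (vouter a b) *ᵥ x)‖ ^ 2 ≤
      (star y ⬝ᵥ (E (vouter a a) *ᵥ y)).re * (star x ⬝ᵥ (E (vouter b b) *ᵥ x)).re := by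
    intro a b y x
    rw [sesq_choi, sesq_choi, sesq_choi]
    exact psd_cs hChoi _ _
  set M := E (vouter ψp ψm) with hM_def
  set N := E (vouter ψm ψp) with hN_def
  have hcsM : ∀ y x, ‖star y ⬝ᵥ (M *ᵥ x)‖ ^ 2 ≤
      (pp * pm) * (Complex.normSq (dot φp y) * Complex.normSq (dot φm x)) := by
    intro y x
    have h := keyCS ψp ψm y x
    rw [hqp y, hqm x] at h
    calc ‖star y ⬝ᵥ (M *ᵥ x)‖ ^ 2
        ≤ pp * Complex.normSq (dot φp y) * (pm * Complex.normSq (dot φm x)) := h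
      _ = (pp * pm) * (Complex.normSq (dot φp y) * Complex.normSq (dot φm x)) := by ring
  have hcsN : ∀ y x, ‖star y ⬝ᵥ (N *ᵥ x)‖ ^ 2 ≤
      (pm * pp) * (Complex.normSq (dot φm y) * Complex.normSq (dot φp x)) := by
    intro y x
    have h := keyCS ψm ψp y x
    rw [hqm y, hqp x] at h
    calc ‖star y ⬝ᵥ (N *ᵥ x)‖ ^ 2
        ≤ pm * Complex.normSq (dot φm y) * (pp * Complex.normSq (dot φp x)) := h
      _ = (pm * pp) * (Complex.normSq (dot φm y) * Complex.normSq (dot φp x)) := by ring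
  have hMeq : M = (star φp ⬝ᵥ (M *ᵥ φm)) • vouter φp φm := rank_one_of_cs hdφp hdφm hcsM
  have hNeq : N = (star φm ⬝ᵥ (N *ᵥ φp)) • vouter φm φp := rank_one_of_cs hdφm hdφp hcsN
  set c1 := star φp ⬝ᵥ (M *ᵥ φm) with hc1_def
  set c2 := star φm ⬝ᵥ (N *ᵥ φp) with hc2_def
  set r := Real.sqrt (pp * pm) with hr_def
  have hr0 : 0 ≤ r := Real.sqrt_nonneg _
  have hr2 : r ^ 2 = pp * pm := Real.sq_sqrt (by positivity)
  have hc1b : ‖c1‖ ≤ r := by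
    have h := hcsM φp φm
    rw [hdφp, hdφm] at h
    simp only [Complex.normSq_one, mul_one] at h
    rw [← Real.sqrt_sq (norm_nonneg c1)]
    exact Real.sqrt_le_sqrt h
  have hc2b : ‖c2‖ ≤ r := by
    have h := hcsN φm φp
    rw [hdφp, hdφm] at h
    simp only [Complex.normSq_one, mul_one] at h
    rw [← Real.sqrt_sq (norm_nonneg c2)]
    rw [hr_def, mul_comm pp pm]
    exact Real.sqrt_le_sqrt h
  have habs_star : ∀ z : ℂ, ‖star z‖ = ‖z‖ := fun z => norm_star z
  have hTrM : ‖M.trace‖ ≤ r * t := by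
    rw [hMeq, Matrix.trace_smul, trace_vouter, smul_eq_mul, norm_mul]
    have h2 : ‖dot φm φp‖ = t := by
      rw [dot_conj, habs_star]
    rw [h2]
    exact mul_le_mul_of_nonneg_right hc1b ht0
  have hTrN : ‖N.trace‖ ≤ r * t := by
    rw [hNeq, Matrix.trace_smul, trace_vouter, smul_eq_mul, norm_mul]
    exact mul_le_mul_of_nonneg_right hc2b ht0
  -- phase and superposition
  set dd := dot ψp ψm with hdd_def
  have hsne : (s:ℂ) ≠ 0 := by exact_mod_cast hs0.ne'
  set ω : ℂ := -(star dd) / (s:ℂ) with hω_def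
  have hnorm_dd : star dd * dd = ((s^2 : ℝ) : ℂ) := by
    have : star dd * dd = ((Complex.normSq dd : ℝ) : ℂ) := by
      rw [Complex.normSq_eq_conj_mul_self]; rfl
    rw [this, ← Complex.sq_norm]
  have hωdd : ω * dd = -(s:ℂ) := by
    have h : ω * dd = -((star dd * dd) / (s:ℂ)) := by rw [hω_def]; ring
    rw [h, hnorm_dd]
    push_cast
    rw [pow_two, mul_div_assoc, div_self hsne, mul_one]
  have hsω : star ω = -dd / (s:ℂ) := by
    rw [hω_def, star_div₀, star_neg, star_star]
    congr 1
    exact Complex.conj_ofReal s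
  have hωω : ω * star ω = 1 := by
    have h : ω * star ω = (star dd * dd) / ((s:ℂ) * (s:ℂ)) := by rw [hω_def, hsω]; ring
    rw [h, hnorm_dd]
    push_cast
    rw [pow_two, div_self (mul_ne_zero hsne hsne)]
  have habsω : ‖ω‖ = 1 := by
    have h := congrArg norm hωω
    rw [norm_mul, habs_star, norm_one] at h
    nlinarith [norm_nonneg ω]
  set χ : Fin d → ℂ := fun i => ψp i + ω * ψm i with hχ_def
  have hvo : vouter χ χ = vouter ψp ψp + vouter ψm ψm
      + star ω • vouter ψp ψm + ω • vouter ψm ψp := by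
    ext i j
    simp only [vouter, Matrix.add_apply, Matrix.smul_apply, Matrix.of_apply, smul_eq_mul,
      hχ_def, star_add, star_mul']
    linear_combination (ψm i * star (ψm j)) * hωω
  have htrace := hTr (vouter χ χ) (vouter_self_posSemidef χ)
  have htr1 : (vouter χ χ).trace = ((2 - 2*s : ℝ) : ℂ) := by
    rw [hvo]
    simp only [Matrix.trace_add, Matrix.trace_smul, trace_vouter, smul_eq_mul]
    rw [hdψp, hdψm, ← hdd_def, dot_conj ψp ψm, ← hdd_def]
    have h1 : star ω * star dd = star (ω * dd) := by rw [star_mul']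
    have h2 : star (-((s:ℝ):ℂ)) = -((s:ℝ):ℂ) := by
      rw [star_neg]; exact congrArg Neg.neg (Complex.conj_ofReal s)
    rw [h1, hωdd, h2]
    push_cast
    ring
  have htr2 : (E (vouter χ χ)).trace = (pp:ℂ) + (pm:ℂ) + star ω * M.trace + ω * N.trace := by
    have hEvo : E (vouter χ χ) = (pp:ℂ) • vouter φp φp + (pm:ℂ) • vouter φm φm
        + star ω • M + ω • N := by
      rw [hvo]
      simp only [map_add, LinearMap.map_smul]
      rw [← outer_eq_vouter ψp, ← outer_eq_vouter ψm, hEp, hEm,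
        outer_eq_vouter, outer_eq_vouter, ← hM_def, ← hN_def]
    rw [hEvo]
    simp only [Matrix.trace_add, Matrix.trace_smul, trace_vouter, smul_eq_mul]
    rw [hdφp, hdφm]
    ring
  rw [htr1, htr2] at htrace
  simp only [Complex.add_re, Complex.ofReal_re] at htrace
  -- lower bound the real parts of the cross terms
  have hreM : -(r*t) ≤ (star ω * M.trace).re := by
    have h1 : ‖star ω * M.trace‖ ≤ r * t := by
      rw [norm_mul, habs_star, habsω, one_mul]; exact hTrM
    have h2 := (abs_le.mp (Complex.abs_re_le_norm (star ω * M.trace))).1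
    linarith
  have hreN : -(r*t) ≤ (ω * N.trace).re := by
    have h1 : ‖ω * N.trace‖ ≤ r * t := by
      rw [norm_mul, habsω, one_mul]; exact hTrN
    have h2 := (abs_le.mp (Complex.abs_re_le_norm (ω * N.trace))).1
    linarith
  have hmain : pp + pm - 2*(r*t) ≤ 2 - 2*s := by linarith
  -- final algebra
  have h2r : 2 * r ≤ pp + pm := by
    have hs1' : r = Real.sqrt pp * Real.sqrt pm := Real.sqrt_mul hpp.le pm
    nlinarith [sq_nonneg (Real.sqrt pp - Real.sqrt pm), Real.sq_sqrt hpp.le,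
      Real.sq_sqrt hpm.le, Real.sqrt_nonneg pp, Real.sqrt_nonneg pm]
  have hminr : min pp pm ≤ r := by
    rcases le_total pp pm with h | h
    · rw [min_eq_left h, ← Real.sqrt_sq hpp.le]
      exact Real.sqrt_le_sqrt (by nlinarith)
    · rw [min_eq_right h, ← Real.sqrt_sq hpm.le]
      exact Real.sqrt_le_sqrt (by nlinarith)
  have hr1t : r * (1 - t) ≤ 1 - s := by nlinarith [hmain, h2r]
  rw [le_div_iff₀ (by linarith : (0:ℝ) < 1 - t)]
  calc min pp pm * (1 - t) ≤ r * (1 - t) :=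
        mul_le_mul_of_nonneg_right hminr (by linarith)
    _ ≤ 1 - s := hr1t
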